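/- arXiv:1006.4482 — 4 statements merged into one kernel-verified Lean document; each statement's English description precedes it below -/
import Mathlib

section
/- Let G, F : ℝ × ℝ → Matrix (Fin m) (Fin m) ℂ satisfy the zero curvature equation G_t - F_x + G*F - F*G = 0 on the semi-strip D = [0,∞) × [0,a), where G, G_t, F are continuous in (x,t) and F_x exists. Let W(x,t) be the solution of ∂W/∂x = G·W with W(0,t) = I, and let R(x,t) be the solution of ∂R/∂t = F·R with R(x,0) = I. Then for all (x,t) ∈ D, W(x,t)·R(0,t) = R(x,t)·W(x,0). -/
open Matrix Set

attribute [local instance] Matrix.normedAddCommGroup Matrix.normedSpace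

set_option maxHeartbeats 1000000
namespace FactAux
variable {m : ℕ}

lemma norm_mul_le' (A B : Matrix (Fin m) (Fin m) ℂ) : ‖A * B‖ ≤ (m : ℝ) * ‖A‖ * ‖B‖ := by
  rw [Matrix.norm_le_iff (by positivity)]
  intro i j
  calc ‖(A * B) i j‖ = ‖∑ k, A i k * B k j‖ := by rw [Matrix.mul_apply]
    _ ≤ ∑ k, ‖A i k * B k j‖ := norm_sum_le _ _
    _ ≤ ∑ _k : Fin m, ‖A‖ * ‖B‖ := by
        refine Finset.sum_le_sum fun k _ => ?_
        rw [norm_mul]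
        exact mul_le_mul (Matrix.norm_entry_le_entrywise_sup_norm A)
          (Matrix.norm_entry_le_entrywise_sup_norm B) (norm_nonneg _) (norm_nonneg _)
    _ = (m : ℝ) * ‖A‖ * ‖B‖ := by simp [Finset.sum_const, mul_assoc]

noncomputable def mulCLM (m : ℕ) :
    Matrix (Fin m) (Fin m) ℂ →L[ℝ] Matrix (Fin m) (Fin m) ℂ →L[ℝ] Matrix (Fin m) (Fin m) ℂ :=
  LinearMap.mkContinuous₂
    (LinearMap.mk₂ ℝ (fun A B => A * B) (fun A B C => add_mul A B C)
      (fun r A B => smul_mul_assoc r A B) (fun A B C => mul_add A B C)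
      (fun r A B => mul_smul_comm r A B)) m (fun A B => norm_mul_le' A B)

lemma mulCLM_apply (A B : Matrix (Fin m) (Fin m) ℂ) : mulCLM m A B = A * B := rfl

lemma HDW.mul {f g : ℝ → Matrix (Fin m) (Fin m) ℂ} {f' g' : Matrix (Fin m) (Fin m) ℂ}
    {s : Set ℝ} {x : ℝ} (hf : HasDerivWithinAt f f' s x) (hg : HasDerivWithinAt g g' s x) :
    HasDerivWithinAt (fun y => f y * g y) (f' * g x + f x * g') s x := by
  letI : NormedAddCommGroup (Matrix (Fin m) (Fin m) ℂ →L[ℝ] Matrix (Fin m) (Fin m) ℂ) :=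
    ContinuousLinearMap.toNormedAddCommGroup
  letI : NormedSpace ℝ (Matrix (Fin m) (Fin m) ℂ →L[ℝ] Matrix (Fin m) (Fin m) ℂ) :=
    ContinuousLinearMap.toNormedSpace
  have h1 : HasDerivWithinAt (fun y => mulCLM m (f y)) (mulCLM m f') s x :=
    ((mulCLM m).hasFDerivAt (x := f x)).comp_hasDerivWithinAt x hf
  have h2 := h1.clm_apply hg
  exact h2

lemma HD.mul {f g : ℝ → Matrix (Fin m) (Fin m) ℂ} {f' g' : Matrix (Fin m) (Fin m) ℂ}
    {x : ℝ} (hf : HasDerivAt f f' x) (hg : HasDerivAt g g' x) :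
    HasDerivAt (fun y => f y * g y) (f' * g x + f x * g') x := by
  exact hasDerivWithinAt_univ.1 (HDW.mul hf.hasDerivWithinAt hg.hasDerivWithinAt)

/-- The key lemma: `t`-differentiability of `W`, with `∂ₜW = F W - W F(0,·)`. -/
lemma deriv_W_t {a : ℝ} {G F Gt Fx W : ℝ → ℝ → Matrix (Fin m) (Fin m) ℂ}
    (hGc : ContinuousOn (fun p : ℝ × ℝ => G p.1 p.2) (Ici (0:ℝ) ×ˢ Ico (0:ℝ) a))
    (hGtc : ContinuousOn (fun p : ℝ × ℝ => Gt p.1 p.2) (Ici (0:ℝ) ×ˢ Ico (0:ℝ) a))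
    (hFc : ContinuousOn (fun p : ℝ × ℝ => F p.1 p.2) (Ici (0:ℝ) ×ˢ Ico (0:ℝ) a))
    (hGt : ∀ x t, (x, t) ∈ Ici (0:ℝ) ×ˢ Ico (0:ℝ) a → HasDerivAt (fun s => G x s) (Gt x t) t)
    (hFx : ∀ x t, (x, t) ∈ Ici (0:ℝ) ×ˢ Ico (0:ℝ) a → HasDerivAt (fun y => F y t) (Fx x t) x)
    (hzc : ∀ x t, (x, t) ∈ Ici (0:ℝ) ×ˢ Ico (0:ℝ) a →
      Gt x t - Fx x t + (G x t * F x t - F x t * G x t) = 0)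
    (hW : ∀ x t, (x, t) ∈ Ici (0:ℝ) ×ˢ Ico (0:ℝ) a → HasDerivAt (fun y => W y t) (G x t * W x t) x)
    (hW0 : ∀ t, 0 ≤ t → t < a → W 0 t = 1) :
    ∀ x : ℝ, 0 ≤ x → ∀ t ∈ Ico (0:ℝ) a,
      HasDerivWithinAt (fun s => W x s) (F x t * W x t - W x t * F 0 t) (Ico 0 a) t := by
  intro x hx t ht
  obtain ⟨ht0, hta⟩ := ht
  set b : ℝ := (t + a) / 2 with hbdef
  have htb : t < b := by simp only [hbdef]; linarith
  have hba : b < a := by simp only [hbdef]; linarith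
  have hb0 : 0 ≤ b := le_of_lt (lt_of_le_of_lt ht0 htb)
  -- the compact set and membership facts
  have hKD : Icc (0:ℝ) x ×ˢ Icc (0:ℝ) b ⊆ Ici (0:ℝ) ×ˢ Ico (0:ℝ) a := by
    intro p hp
    exact ⟨hp.1.1, hp.2.1, lt_of_le_of_lt hp.2.2 hba⟩
  have hKc : IsCompact (Icc (0:ℝ) x ×ˢ Icc (0:ℝ) b) := isCompact_Icc.prod isCompact_Icc
  have hmemD : ∀ y : ℝ, 0 ≤ y → ∀ s ∈ Icc (0:ℝ) b,
      (y, s) ∈ Ici (0:ℝ) ×ˢ Ico (0:ℝ) a :=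
    fun y hy s hs => ⟨hy, hs.1, lt_of_le_of_lt hs.2 hba⟩
  have htbmem : t ∈ Icc (0:ℝ) b := ⟨ht0, le_of_lt htb⟩
  -- bounds on G, Gt, F on the compact set
  obtain ⟨MG, hMG⟩ := hKc.exists_bound_of_continuousOn (hGc.mono hKD)
  obtain ⟨MGt, hMGt⟩ := hKc.exists_bound_of_continuousOn (hGtc.mono hKD)
  obtain ⟨MF, hMF⟩ := hKc.exists_bound_of_continuousOn (hFc.mono hKD)
  have hMG0 : 0 ≤ MG := le_trans (norm_nonneg _) (hMG (0, 0) ⟨⟨le_refl _, hx⟩, le_refl _, hb0⟩)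
  have hMGt0 : 0 ≤ MGt := le_trans (norm_nonneg _) (hMGt (0, 0) ⟨⟨le_refl _, hx⟩, le_refl _, hb0⟩)
  have hMF0 : 0 ≤ MF := le_trans (norm_nonneg _) (hMF (0, 0) ⟨⟨le_refl _, hx⟩, le_refl _, hb0⟩)
  set K : ℝ := (m : ℝ) * MG + 1 with hKdef
  have hK0 : 0 < K := by positivity
  set N1 : ℝ := ‖(1 : Matrix (Fin m) (Fin m) ℂ)‖ with hN1def
  set MW : ℝ := N1 * Real.exp (K * x) with hMWdef
  have hMW0 : 0 ≤ MW := by positivity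
  -- bound on W
  have hWb : ∀ s ∈ Icc (0:ℝ) b, ∀ y ∈ Icc (0:ℝ) x, ‖W y s‖ ≤ MW := by
    intro s hs y hy
    have hcont : ContinuousOn (fun y => W y s) (Icc 0 x) := fun z hz =>
      ((hW z s (hmemD z hz.1 s hs)).continuousAt).continuousWithinAt
    have hgr := norm_le_gronwallBound_of_norm_deriv_right_le (f := fun y => W y s)
      (f' := fun y => G y s * W y s) (δ := N1) (K := K) (ε := 0) (a := 0) (b := x) hcont
      (fun z hz => (hW z s (hmemD z hz.1 s hs)).hasDerivWithinAt)
      (by show ‖W 0 s‖ ≤ N1; rw [hW0 s hs.1 (lt_of_le_of_lt hs.2 hba)])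
      (fun z hz => by
        have h1 := norm_mul_le' (G z s) (W z s)
        have h2 : ‖G z s‖ ≤ MG := hMG (z, s) ⟨⟨hz.1, le_of_lt hz.2⟩, hs⟩
        have h3 : (m : ℝ) * ‖G z s‖ * ‖W z s‖ ≤ K * ‖W z s‖ + 0 := by
          rw [add_zero, hKdef]
          have : (m : ℝ) * ‖G z s‖ ≤ (m : ℝ) * MG := by
            apply mul_le_mul_of_nonneg_left h2 (Nat.cast_nonneg m)
          nlinarith [norm_nonneg (W z s)]
        exact le_trans h1 h3)
      y hy
    rw [gronwallBound_ε0, sub_zero] at hgr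
    refine le_trans hgr ?_
    rw [hMWdef]
    have : Real.exp (K * y) ≤ Real.exp (K * x) :=
      Real.exp_le_exp.2 (mul_le_mul_of_nonneg_left hy.2 (le_of_lt hK0))
    exact mul_le_mul_of_nonneg_left this (norm_nonneg _)
  -- the candidate derivative
  set Y : ℝ → ℝ → Matrix (Fin m) (Fin m) ℂ := fun y s => F y s * W y s - W y s * F 0 s
    with hYdef
  set MY : ℝ := (m : ℝ) * MF * MW + (m : ℝ) * MW * MF with hMYdef
  have hYb : ∀ y ∈ Icc (0:ℝ) x, ‖Y y t‖ ≤ MY := by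
    intro y hy
    refine le_trans (norm_sub_le _ _) ?_
    have h1 := norm_mul_le' (F y t) (W y t)
    have h2 := norm_mul_le' (W y t) (F 0 t)
    have hF1 : ‖F y t‖ ≤ MF := hMF (y, t) ⟨hy, htbmem⟩
    have hF2 : ‖F 0 t‖ ≤ MF := hMF (0, t) ⟨⟨le_refl _, hx⟩, htbmem⟩
    have hW1 : ‖W y t‖ ≤ MW := hWb t htbmem y hy
    rw [hMYdef]
    have e1 : (m:ℝ) * ‖F y t‖ * ‖W y t‖ ≤ (m:ℝ) * MF * MW := by
      apply mul_le_mul _ hW1 (norm_nonneg _) (by positivity)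
      exact mul_le_mul_of_nonneg_left hF1 (Nat.cast_nonneg m)
    have e2 : (m:ℝ) * ‖W y t‖ * ‖F 0 t‖ ≤ (m:ℝ) * MW * MF := by
      apply mul_le_mul _ hF2 (norm_nonneg _) (by positivity)
      exact mul_le_mul_of_nonneg_left hW1 (Nat.cast_nonneg m)
    linarith
  -- derivative of Y in the x-direction
  have hYd : ∀ y : ℝ, 0 ≤ y →
      HasDerivAt (fun z => Y z t) (Gt y t * W y t + G y t * Y y t) y := by
    intro y hy
    have hm : (y, t) ∈ Ici (0:ℝ) ×ˢ Ico (0:ℝ) a := ⟨hy, ht0, hta⟩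
    have h1 : HasDerivAt (fun z => F z t * W z t)
        (Fx y t * W y t + F y t * (G y t * W y t)) y := HD.mul (hFx y t hm) (hW y t hm)
    have h2 : HasDerivAt (fun z => W z t * F 0 t)
        ((G y t * W y t) * F 0 t + W y t * 0) y :=
      HD.mul (hW y t hm) (hasDerivAt_const y (F 0 t))
    have h3 := h1.sub h2
    have hfx : Fx y t = Gt y t + (G y t * F y t - F y t * G y t) := by
      have h := hzc y t hm
      rw [sub_add_eq_add_sub, sub_eq_zero] at h
      exact h.symm
    refine h3.congr_deriv ?_
    rw [hfx, hYdef]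
    noncomm_ring
  -- uniform continuity of Gt on the compact set
  have hUC := hKc.uniformContinuousOn_of_continuous (hGtc.mono hKD)
  replace hUC := Metric.uniformContinuousOn_iff.1 hUC
  -- FTC for G in the t-variable
  have hGtsl : ∀ y ∈ Icc (0:ℝ) x, ContinuousOn (fun σ => Gt y σ) (Icc 0 b) := by
    intro y hy
    refine (hGtc.mono hKD).comp (Continuous.continuousOn (Continuous.prodMk_right y)) ?_
    intro σ hσ
    exact ⟨hy, hσ⟩
  have hGint : ∀ y ∈ Icc (0:ℝ) x, ∀ s ∈ Icc (0:ℝ) b,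
      ∫ σ in t..s, Gt y σ = G y s - G y t := by
    intro y hy s hs
    have huIcc : uIcc t s ⊆ Icc 0 b := ordConnected_Icc.uIcc_subset htbmem hs
    refine intervalIntegral.integral_eq_sub_of_hasDerivAt ?_ ?_
    · intro σ hσ
      exact hGt y σ (hmemD y hy.1 σ (huIcc hσ))
    · exact ((hGtsl y hy).mono huIcc).intervalIntegrable
  have hGdiff1 : ∀ y ∈ Icc (0:ℝ) x, ∀ s ∈ Icc (0:ℝ) b,
      ‖G y s - G y t‖ ≤ MGt * |s - t| := by
    intro y hy s hs
    rw [← hGint y hy s hs]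
    exact intervalIntegral.norm_integral_le_of_norm_le_const (fun σ hσ =>
      hMGt (y, σ) ⟨hy, ordConnected_Icc.uIcc_subset htbmem hs (uIoc_subset_uIcc hσ)⟩)
  -- the little-o statement
  refine hasDerivWithinAt_iff_isLittleO.2 ?_
  rw [Asymptotics.isLittleO_iff]
  intro c hc
  set Cx : ℝ := (Real.exp (K * x) - 1) / K with hCxdef
  have hCx0 : 0 ≤ Cx := by
    apply div_nonneg _ (le_of_lt hK0)
    have : (1:ℝ) ≤ Real.exp (K * x) := Real.one_le_exp (by positivity)
    linarith
  set c1 : ℝ := c / (2 * ((m : ℝ) * MW * Cx + 1)) with hc1def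
  have hc10 : 0 < c1 := by positivity
  obtain ⟨δ1, hδ10, hδ1⟩ := hUC c1 hc10
  set r : ℝ := min δ1 (min (b - t) (c / (2 * ((m:ℝ) * MGt * MY * Cx + 1)))) with hrdef
  have hr0 : 0 < r := by
    refine lt_min hδ10 (lt_min (by linarith) (by positivity))
  filter_upwards [self_mem_nhdsWithin,
    mem_nhdsWithin_of_mem_nhds (Metric.ball_mem_nhds t hr0)] with s hsI hsb
  -- s is in [0, b] and close to t
  have hst : |s - t| < r := by
    rw [Metric.mem_ball, Real.dist_eq] at hsb
    exact hsb
  have hsIcc : s ∈ Icc (0:ℝ) b := by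
    constructor
    · exact hsI.1
    · have h1 : |s - t| < b - t := lt_of_lt_of_le hst (le_trans (min_le_right _ _) (min_le_left _ _))
      have := abs_lt.1 h1
      linarith
  -- the difference function and its properties
  set Δ : ℝ → Matrix (Fin m) (Fin m) ℂ :=
    fun y => W y s - W y t - (s - t) • Y y t with hΔdef
  set E : ℝ → Matrix (Fin m) (Fin m) ℂ :=
    fun y => (G y s - G y t - (s - t) • Gt y t) * W y t + (s - t) • ((G y s - G y t) * Y y t)
    with hEdef
  set ε : ℝ := ((m:ℝ) * MW * c1 + (m:ℝ) * MGt * MY * |s - t|) * |s - t| with hεdef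
  -- pointwise derivative of Δ
  have hΔd : ∀ y : ℝ, 0 ≤ y → HasDerivAt Δ (G y s * Δ y + E y) y := by
    intro y hy
    have hms : (y, s) ∈ Ici (0:ℝ) ×ˢ Ico (0:ℝ) a := hmemD y hy s hsIcc
    have hmt : (y, t) ∈ Ici (0:ℝ) ×ˢ Ico (0:ℝ) a := hmemD y hy t htbmem
    have h1 := (hW y s hms).sub (hW y t hmt)
    have h2 := h1.sub ((hYd y hy).const_smul (s - t))
    refine h2.congr_deriv ?_
    simp only [hΔdef, hEdef, mul_sub, sub_mul, mul_add, add_mul, smul_sub, smul_add,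
      mul_smul_comm, smul_mul_assoc]
    abel
  -- second-order smallness of G in t
  have hGdiff2 : ∀ y ∈ Icc (0:ℝ) x, ‖G y s - G y t - (s - t) • Gt y t‖ ≤ c1 * |s - t| := by
    intro y hy
    have huIcc : uIcc t s ⊆ Icc 0 b := ordConnected_Icc.uIcc_subset htbmem hsIcc
    have hint1 :=
      ((hGtsl y hy).mono huIcc).intervalIntegrable (μ := MeasureTheory.volume)
    have hint2 :=
      intervalIntegrable_const (μ := MeasureTheory.volume) (a := t) (b := s) (c := Gt y t)
    have heq : G y s - G y t - (s - t) • Gt y t = ∫ σ in t..s, (Gt y σ - Gt y t) := by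
      rw [intervalIntegral.integral_sub hint1 hint2, hGint y hy s hsIcc,
        intervalIntegral.integral_const]
    rw [heq]
    refine intervalIntegral.norm_integral_le_of_norm_le_const (fun σ hσ => ?_)
    have hσb : σ ∈ Icc (0:ℝ) b := huIcc (uIoc_subset_uIcc hσ)
    have hd : dist (y, σ) ((y, t) : ℝ × ℝ) < δ1 := by
      rw [Prod.dist_eq]
      simp only [dist_self]
      have hσt : |σ - t| ≤ |s - t| := by
        rcases Set.mem_uIoc.1 hσ with ⟨h1, h2⟩ | ⟨h1, h2⟩
        · rw [abs_of_nonneg (by linarith : (0:ℝ) ≤ σ - t),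
            abs_of_nonneg (by linarith : (0:ℝ) ≤ s - t)]
          linarith
        · rw [abs_of_nonpos (by linarith : σ - t ≤ (0:ℝ)),
            abs_of_nonpos (by linarith : s - t ≤ (0:ℝ))]
          linarith
      rw [max_eq_right dist_nonneg, Real.dist_eq]
      calc |σ - t| ≤ |s - t| := hσt
        _ < r := hst
        _ ≤ δ1 := min_le_left _ _
    have := hδ1 (y, σ) ⟨hy, hσb⟩ (y, t) ⟨hy, htbmem⟩ hd
    rw [dist_eq_norm] at this
    exact le_of_lt this
  have hMY0 : 0 ≤ MY := by positivity
  -- continuity and initial value of Δ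
  have hΔc : ContinuousOn Δ (Icc 0 x) := fun y hy =>
    ((hΔd y hy.1).continuousAt).continuousWithinAt
  have hY0 : Y 0 t = 0 := by
    simp only [hYdef, hW0 t ht0 hta, mul_one, one_mul, sub_self]
  have hΔ0 : ‖Δ 0‖ ≤ 0 := by
    simp only [hΔdef, hY0, smul_zero, hW0 s hsIcc.1 (lt_of_le_of_lt hsIcc.2 hba),
      hW0 t ht0 hta, sub_self, sub_zero, norm_zero, le_refl]
  -- derivative bound for Grönwall
  have hbound : ∀ y ∈ Ico (0:ℝ) x, ‖G y s * Δ y + E y‖ ≤ K * ‖Δ y‖ + ε := by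
    intro y hy
    have hyI : y ∈ Icc (0:ℝ) x := ⟨hy.1, le_of_lt hy.2⟩
    refine le_trans (norm_add_le _ _) ?_
    have b1 : ‖G y s * Δ y‖ ≤ K * ‖Δ y‖ := by
      refine le_trans (norm_mul_le' _ _) ?_
      have h2 : ‖G y s‖ ≤ MG := hMG (y, s) ⟨hyI, hsIcc⟩
      have : (m:ℝ) * ‖G y s‖ ≤ K := by
        rw [hKdef]
        nlinarith [Nat.cast_nonneg (α := ℝ) m]
      exact mul_le_mul_of_nonneg_right this (norm_nonneg _)
    have b2 : ‖E y‖ ≤ ε := by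
      refine le_trans (norm_add_le _ _) ?_
      have e1 : ‖(G y s - G y t - (s - t) • Gt y t) * W y t‖ ≤ (m:ℝ) * (c1 * |s - t|) * MW := by
        refine le_trans (norm_mul_le' _ _) ?_
        have h1 := hGdiff2 y hyI
        have h2 := hWb t htbmem y hyI
        exact mul_le_mul (mul_le_mul_of_nonneg_left h1 (Nat.cast_nonneg m)) h2
          (norm_nonneg _) (by positivity)
      have e2 : ‖(s - t) • ((G y s - G y t) * Y y t)‖ ≤ |s - t| * ((m:ℝ) * (MGt * |s - t|) * MY) := by
        rw [norm_smul, Real.norm_eq_abs]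
        refine mul_le_mul_of_nonneg_left ?_ (abs_nonneg _)
        refine le_trans (norm_mul_le' _ _) ?_
        have h1 := hGdiff1 y hyI s hsIcc
        have h2 := hYb y hyI
        exact mul_le_mul (mul_le_mul_of_nonneg_left h1 (Nat.cast_nonneg m)) h2
          (norm_nonneg _) (by positivity)
      have hsum : (m:ℝ) * (c1 * |s - t|) * MW
          + |s - t| * ((m:ℝ) * (MGt * |s - t|) * MY) = ε := by
        rw [hεdef]; ring
      linarith
    linarith
  -- Grönwall
  have hgr := norm_le_gronwallBound_of_norm_deriv_right_le (f := Δ)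
    (f' := fun y => G y s * Δ y + E y) (δ := 0) (K := K) (ε := ε) (a := 0) (b := x)
    hΔc (fun y hy => (hΔd y hy.1).hasDerivWithinAt) hΔ0 hbound x (right_mem_Icc.2 hx)
  have hgb : gronwallBound 0 K ε (x - 0) = ε * Cx := by
    rw [sub_zero, gronwallBound_of_K_ne_0 (ne_of_gt hK0), hCxdef]
    ring
  rw [hgb] at hgr
  -- final estimate
  have habs : (0:ℝ) ≤ |s - t| := abs_nonneg _
  have hεCx : ε * Cx ≤ c * |s - t| := by
    have key1 : (m:ℝ) * MW * Cx * c1 ≤ c / 2 := by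
      rw [hc1def, mul_div_assoc']
      rw [div_le_div_iff₀ (by positivity) (by norm_num : (0:ℝ) < 2)]
      nlinarith [mul_nonneg (mul_nonneg (Nat.cast_nonneg (α := ℝ) m) hMW0) hCx0, hc.le]
    have hstc : |s - t| ≤ c / (2 * ((m:ℝ) * MGt * MY * Cx + 1)) :=
      le_of_lt (lt_of_lt_of_le hst (le_trans (min_le_right _ _) (min_le_right _ _)))
    have key2 : (m:ℝ) * MGt * MY * Cx * |s - t| ≤ c / 2 := by
      have hB : (0:ℝ) ≤ (m:ℝ) * MGt * MY * Cx := by positivity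
      have h1 : (m:ℝ) * MGt * MY * Cx * |s - t| ≤
          (m:ℝ) * MGt * MY * Cx * (c / (2 * ((m:ℝ) * MGt * MY * Cx + 1))) :=
        mul_le_mul_of_nonneg_left hstc hB
      refine le_trans h1 ?_
      rw [mul_div_assoc']
      rw [div_le_div_iff₀ (by positivity) (by norm_num : (0:ℝ) < 2)]
      nlinarith [hc.le]
    have expand : ε * Cx = ((m:ℝ) * MW * Cx * c1 + (m:ℝ) * MGt * MY * Cx * |s - t|) * |s - t| := by
      rw [hεdef]; ring
    rw [expand]
    refine mul_le_mul_of_nonneg_right ?_ habs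
    calc (m:ℝ) * MW * Cx * c1 + (m:ℝ) * MGt * MY * Cx * |s - t| ≤ c / 2 + c / 2 :=
          add_le_add key1 key2
      _ = c := by ring
  calc ‖W x s - W x t - (s - t) • (F x t * W x t - W x t * F 0 t)‖ = ‖Δ x‖ := rfl
    _ ≤ ε * Cx := hgr
    _ ≤ c * |s - t| := hεCx
    _ = c * ‖s - t‖ := by rw [Real.norm_eq_abs]
end FactAux

/-- Theorem 1.1 (factorization formula for wave functions): under the zero curvature
equation on the semi-strip `D = [0,∞) × [0,a)`, the fundamental solutions satisfy
`W(x,t) R(0,t) = R(x,t) W(x,0)`. -/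
theorem factorization_of_wave_functions (m : ℕ) (a : ℝ) (ha : 0 < a)
    (G F Gt Fx W R : ℝ → ℝ → Matrix (Fin m) (Fin m) ℂ)
    (D : Set (ℝ × ℝ)) (hD : D = Set.Ici (0:ℝ) ×ˢ Set.Ico (0:ℝ) a)
    -- continuity of G, G_t and F on D
    (hGc : ContinuousOn (fun p : ℝ × ℝ => G p.1 p.2) D)
    (hGtc : ContinuousOn (fun p : ℝ × ℝ => Gt p.1 p.2) D)
    (hFc : ContinuousOn (fun p : ℝ × ℝ => F p.1 p.2) D)
    -- existence of the derivatives G_t and F_x on D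
    (hGt : ∀ x t, (x, t) ∈ D → HasDerivAt (fun s => G x s) (Gt x t) t)
    (hFx : ∀ x t, (x, t) ∈ D → HasDerivAt (fun y => F y t) (Fx x t) x)
    -- zero curvature equation G_t - F_x + [G, F] = 0 on D
    (hzc : ∀ x t, (x, t) ∈ D →
      Gt x t - Fx x t + (G x t * F x t - F x t * G x t) = 0)
    -- W solves ∂W/∂x = G W, W(0,t) = I
    (hW : ∀ x t, (x, t) ∈ D → HasDerivAt (fun y => W y t) (G x t * W x t) x)
    (hW0 : ∀ t, 0 ≤ t → t < a → W 0 t = 1)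
    -- R solves ∂R/∂t = F R, R(x,0) = I
    (hR : ∀ x t, (x, t) ∈ D → HasDerivAt (fun s => R x s) (F x t * R x t) t)
    (hR0 : ∀ x, 0 ≤ x → R x 0 = 1) :
    ∀ x t, (x, t) ∈ D → W x t * R 0 t = R x t * W x 0 := by
  subst hD
  intro x t hxt
  obtain ⟨hx, ht0, hta⟩ := hxt
  have hx' : (0:ℝ) ≤ x := hx
  -- key: t-differentiability of W
  have hWt := FactAux.deriv_W_t hGc hGtc hFc hGt hFx hzc hW hW0
  set φ : ℝ → Matrix (Fin m) (Fin m) ℂ := fun s => W x s * R 0 s - R x s * W x 0 with hφdef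
  have hsm : ∀ s ∈ Icc (0:ℝ) t, s ∈ Ico (0:ℝ) a :=
    fun s hs => ⟨hs.1, lt_of_le_of_lt hs.2 hta⟩
  -- bound on F x · on [0, t]
  have hFsl : ContinuousOn (fun s => F x s) (Icc 0 t) := by
    refine hFc.comp (Continuous.continuousOn (Continuous.prodMk_right x)) ?_
    intro σ hσ
    exact ⟨hx, hsm σ hσ⟩
  obtain ⟨MF, hMF⟩ := isCompact_Icc.exists_bound_of_continuousOn hFsl
  set K : ℝ := (m:ℝ) * MF + 1 with hKdef
  have hMF0 : 0 ≤ MF := le_trans (norm_nonneg _) (hMF 0 ⟨le_refl 0, ht0⟩)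
  -- continuity of φ
  have hWcont : ContinuousOn (fun s => W x s) (Icc 0 t) := fun s hs =>
    ((hWt x hx' s (hsm s hs)).continuousWithinAt).mono (fun u hu => hsm u hu)
  have hR0cont : ContinuousOn (fun s => R 0 s) (Icc 0 t) := fun s hs =>
    ((hR 0 s ⟨Set.self_mem_Ici, hsm s hs⟩).continuousAt).continuousWithinAt
  have hRxcont : ContinuousOn (fun s => R x s) (Icc 0 t) := fun s hs =>
    ((hR x s ⟨hx, hsm s hs⟩).continuousAt).continuousWithinAt
  have hφc : ContinuousOn φ (Icc 0 t) :=
    (hWcont.mul hR0cont).sub (hRxcont.mul continuousOn_const)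
  -- derivative of φ
  have hφd : ∀ s ∈ Ico (0:ℝ) t, HasDerivWithinAt φ (F x s * φ s) (Ici s) s := by
    intro s hs
    have hsIco : s ∈ Ico (0:ℝ) a := ⟨hs.1, lt_trans hs.2 hta⟩
    have hmem0 : ((0:ℝ), s) ∈ Ici (0:ℝ) ×ˢ Ico (0:ℝ) a := ⟨Set.self_mem_Ici, hsIco⟩
    have hmemx : (x, s) ∈ Ici (0:ℝ) ×ˢ Ico (0:ℝ) a := ⟨hx, hsIco⟩
    have h1 := FactAux.HDW.mul (hWt x hx' s hsIco)
      ((hR 0 s hmem0).hasDerivWithinAt (s := Ico (0:ℝ) a))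
    have h2 := FactAux.HDW.mul ((hR x s hmemx).hasDerivWithinAt (s := Ico (0:ℝ) a))
      (hasDerivWithinAt_const s (Ico (0:ℝ) a) (W x 0))
    have h3 := h1.sub h2
    have h4 : HasDerivWithinAt φ (F x s * φ s) (Ico 0 a) s := by
      refine h3.congr_deriv ?_
      simp only [hφdef]
      noncomm_ring
    refine h4.mono_of_mem_nhdsWithin ?_
    rw [mem_nhdsWithin]
    exact ⟨Iio a, isOpen_Iio, hsIco.2,
      fun u hu => ⟨le_trans hs.1 hu.2, hu.1⟩⟩
  -- initial value
  have hφ0 : ‖φ 0‖ ≤ 0 := by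
    simp only [hφdef, hR0 0 (le_refl 0), hR0 x hx', mul_one, one_mul, sub_self, norm_zero,
      le_refl]
  -- derivative bound
  have hb : ∀ s ∈ Ico (0:ℝ) t, ‖F x s * φ s‖ ≤ K * ‖φ s‖ + 0 := by
    intro s hs
    rw [add_zero]
    refine le_trans (FactAux.norm_mul_le' _ _) ?_
    have h2 : ‖F x s‖ ≤ MF := hMF s ⟨hs.1, le_of_lt hs.2⟩
    have : (m:ℝ) * ‖F x s‖ ≤ K := by
      rw [hKdef]
      nlinarith [Nat.cast_nonneg (α := ℝ) m]
    exact mul_le_mul_of_nonneg_right this (norm_nonneg _)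
  -- Grönwall
  have hgr := norm_le_gronwallBound_of_norm_deriv_right_le (f := φ)
    (f' := fun s => F x s * φ s) (δ := 0) (K := K) (ε := 0) (a := 0) (b := t)
    hφc hφd hφ0 hb t (right_mem_Icc.2 ht0)
  rw [gronwallBound_ε0, zero_mul] at hgr
  have : φ t = 0 := norm_le_zero_iff.1 hgr
  exact sub_eq_zero.1 this
end

section
/- Under the hypotheses of the factorization theorem (zero curvature G_t - F_x + [G,F] = 0, with G, G_t, F continuous and F_x existing), the fundamental solution W of ∂W/∂x = G·W with W(0,t) = I satisfies the identity W_t(x,t) - F(x,t)·W(x,t) = -W(x,t)·F(0,t) for all (x,t) in the semi-strip. -/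
open Matrix Set MeasureTheory intervalIntegral

attribute [local instance] Matrix.normedAddCommGroup Matrix.normedSpace

section helpers

variable {m : ℕ}

lemma Matrix.norm_mul_le'' (A B : Matrix (Fin m) (Fin m) ℂ) :
    ‖A * B‖ ≤ (m : ℝ) * ‖A‖ * ‖B‖ := by
  refine (Matrix.norm_le_iff (by positivity)).2 fun i j => ?_
  calc ‖(A * B) i j‖ = ‖∑ k, A i k * B k j‖ := by rw [Matrix.mul_apply]
    _ ≤ ∑ k, ‖A i k * B k j‖ := norm_sum_le _ _
    _ ≤ ∑ _k : Fin m, ‖A‖ * ‖B‖ := Finset.sum_le_sum fun k _ => by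
        rw [norm_mul]
        exact mul_le_mul (Matrix.norm_entry_le_entrywise_sup_norm A)
          (Matrix.norm_entry_le_entrywise_sup_norm B) (norm_nonneg _) (norm_nonneg _)
    _ = (m:ℝ) * ‖A‖ * ‖B‖ := by simp [mul_assoc]

noncomputable def Matrix.mulLW (m : ℕ) :
    Matrix (Fin m) (Fin m) ℂ →L[ℝ] Matrix (Fin m) (Fin m) ℂ →L[ℝ] Matrix (Fin m) (Fin m) ℂ :=
  LinearMap.mkContinuous₂ (LinearMap.mul ℝ _) m fun A B => Matrix.norm_mul_le'' A B

@[simp] lemma Matrix.mulLW_apply (A B : Matrix (Fin m) (Fin m) ℂ) :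
    Matrix.mulLW m A B = A * B := rfl

lemma HasDerivAt.matmul {f g : ℝ → Matrix (Fin m) (Fin m) ℂ} {f' g' : Matrix (Fin m) (Fin m) ℂ}
    {x : ℝ} (hf : HasDerivAt f f' x) (hg : HasDerivAt g g' x) :
    HasDerivAt (fun y => f y * g y) (f' * g x + f x * g') x := by
  have hfg : HasDerivAt (fun y => (f y, g y)) (f', g') x := hf.prodMk hg
  have hB := ((Matrix.mulLW m).isBoundedBilinearMap.hasFDerivAt (f x, g x)).comp_hasDerivAt x hfg
  simp only [IsBoundedBilinearMap.deriv_apply, Matrix.mulLW_apply] at hB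
  have h2 : HasDerivAt (fun y => f y * g y) (f x * g' + f' * g x) x := hB
  simpa [add_comm] using h2

lemma continuous_matmul :
    Continuous (fun p : Matrix (Fin m) (Fin m) ℂ × Matrix (Fin m) (Fin m) ℂ => p.1 * p.2) :=
  (Matrix.mulLW m).isBoundedBilinearMap.continuous

lemma ContinuousOn.matmul {α : Type*} [TopologicalSpace α] {f g : α → Matrix (Fin m) (Fin m) ℂ}
    {s : Set α} (hf : ContinuousOn f s) (hg : ContinuousOn g s) :
    ContinuousOn (fun y => f y * g y) s :=
  continuous_matmul.comp_continuousOn (hf.prodMk hg)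

end helpers
set_option maxHeartbeats 4000000

/-- Equation (1.10): under the zero curvature hypotheses, the fundamental solution `W`
of `∂W/∂x = G W`, `W(0,t) = I`, satisfies
`W_t(x,t) - F(x,t) W(x,t) = - W(x,t) F(0,t)` on the semi-strip. -/
theorem Wt_identity (m : ℕ) (a : ℝ) (ha : 0 < a)
    (G F Gt Fx W Wt : ℝ → ℝ → Matrix (Fin m) (Fin m) ℂ)
    (D : Set (ℝ × ℝ)) (hD : D = Set.Ici (0:ℝ) ×ˢ Set.Ico (0:ℝ) a)
    (hGc : ContinuousOn (fun p : ℝ × ℝ => G p.1 p.2) D)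
    (hGtc : ContinuousOn (fun p : ℝ × ℝ => Gt p.1 p.2) D)
    (hFc : ContinuousOn (fun p : ℝ × ℝ => F p.1 p.2) D)
    (hGt : ∀ x t, (x, t) ∈ D → HasDerivAt (fun s => G x s) (Gt x t) t)
    (hFx : ∀ x t, (x, t) ∈ D → HasDerivAt (fun y => F y t) (Fx x t) x)
    (hzc : ∀ x t, (x, t) ∈ D →
      Gt x t - Fx x t + (G x t * F x t - F x t * G x t) = 0)
    (hW : ∀ x t, (x, t) ∈ D → HasDerivAt (fun y => W y t) (G x t * W x t) x)
    (hW0 : ∀ t, 0 ≤ t → t < a → W 0 t = 1)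
    -- Wt is the t-derivative of W (which exists by smooth parameter dependence)
    (hWt : ∀ x t, (x, t) ∈ D → HasDerivAt (fun s => W x s) (Wt x t) t) :
    ∀ x t, (x, t) ∈ D → Wt x t - F x t * W x t = -(W x t * F 0 t) := by
  intro x t hxt
  letI : UniformSpace (Matrix (Fin m) (Fin m) ℂ) := PseudoMetricSpace.toUniformSpace
  letI : TopologicalSpace (Matrix (Fin m) (Fin m) ℂ) := UniformSpace.toTopologicalSpace
  have hxt' := hxt
  rw [hD] at hxt'
  have hx : 0 ≤ x := hxt'.1
  have ht : 0 ≤ t := hxt'.2.1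
  have hta : t < a := hxt'.2.2
  set b : ℝ := (t + a) / 2 with hbdef
  have htb : t < b := by rw [hbdef]; linarith
  have hba : b < a := by rw [hbdef]; linarith
  have hb0 : 0 < b := lt_of_le_of_lt ht htb
  have htmem : t ∈ Icc (0:ℝ) b := ⟨ht, htb.le⟩
  have hxmem : x ∈ Icc (0:ℝ) x := ⟨hx, le_refl x⟩
  have hmemD : ∀ y σ : ℝ, 0 ≤ y → σ ∈ Icc (0:ℝ) b → (y, σ) ∈ D := by
    intro y σ hy hσ
    rw [hD]; exact ⟨hy, hσ.1, lt_of_le_of_lt hσ.2 hba⟩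
  set Kc : Set (ℝ × ℝ) := Icc 0 x ×ˢ Icc 0 b with hKcdef
  have hKcD : Kc ⊆ D := fun p hp => hmemD p.1 p.2 hp.1.1 hp.2
  have hKc : IsCompact Kc := isCompact_Icc.prod isCompact_Icc
  have huIcc : ∀ s ∈ Icc (0:ℝ) b, uIcc t s ⊆ Icc 0 b := by
    intro s hs
    rw [← Set.uIcc_of_le hb0.le]
    exact Set.uIcc_subset_uIcc (by rw [Set.uIcc_of_le hb0.le]; exact htmem)
      (by rw [Set.uIcc_of_le hb0.le]; exact hs)
  have huIccx : ∀ y ∈ Icc (0:ℝ) x, ∀ z ∈ Icc (0:ℝ) x, uIcc y z ⊆ Icc 0 x := by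
    intro y hy z hz
    rw [← Set.uIcc_of_le hx]
    exact Set.uIcc_subset_uIcc (by rw [Set.uIcc_of_le hx]; exact hy)
      (by rw [Set.uIcc_of_le hx]; exact hz)
  have hGcK : ContinuousOn (fun p : ℝ × ℝ => G p.1 p.2) Kc := hGc.mono hKcD
  have hGtcK : ContinuousOn (fun p : ℝ × ℝ => Gt p.1 p.2) Kc := hGtc.mono hKcD
  have hFcK : ContinuousOn (fun p : ℝ × ℝ => F p.1 p.2) Kc := hFc.mono hKcD
  -- uniform continuity modulus on Kc
  have hec : ∀ (f : ℝ × ℝ → Matrix (Fin m) (Fin m) ℂ), ContinuousOn f Kc →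
      ∀ ε > (0:ℝ), ∃ δ > (0:ℝ), ∀ p ∈ Kc, ∀ q ∈ Kc, dist p q ≤ δ → ‖f p - f q‖ ≤ ε := by
    intro f hf ε hε
    have hu := hKc.uniformContinuousOn_of_continuous hf
    rw [Metric.uniformContinuousOn_iff] at hu
    obtain ⟨δ, hδ0, hδ⟩ := hu ε hε
    refine ⟨δ/2, by positivity, fun p hp q hq hpq => ?_⟩
    have := hδ p hp q hq (lt_of_le_of_lt hpq (by linarith))
    rw [dist_eq_norm] at this
    exact this.le
  -- the Fx formula
  have hFxeq : ∀ y σ : ℝ, (y, σ) ∈ D →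
      Fx y σ = Gt y σ + (G y σ * F y σ - F y σ * G y σ) := by
    intro y σ hyσ
    have h := hzc y σ hyσ
    have h2 : Fx y σ - (Gt y σ + (G y σ * F y σ - F y σ * G y σ))
        = -(Gt y σ - Fx y σ + (G y σ * F y σ - F y σ * G y σ)) := by abel
    rw [← sub_eq_zero, h2, h, neg_zero]
  -- bounds
  obtain ⟨CG, hCG⟩ := hKc.exists_bound_of_continuousOn hGcK
  obtain ⟨CGt, hCGt⟩ := hKc.exists_bound_of_continuousOn hGtcK
  obtain ⟨CF, hCF⟩ := hKc.exists_bound_of_continuousOn hFcK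
  set KG : ℝ := max CG 0 with hKGdef
  set KGt : ℝ := max CGt 0 with hKGtdef
  have hKG0 : 0 ≤ KG := le_max_right _ _
  have hKGt0 : 0 ≤ KGt := le_max_right _ _
  have hKG : ∀ p ∈ Kc, ‖G p.1 p.2‖ ≤ KG := fun p hp => (hCG p hp).trans (le_max_left _ _)
  have hKGt : ∀ p ∈ Kc, ‖Gt p.1 p.2‖ ≤ KGt := fun p hp => (hCGt p hp).trans (le_max_left _ _)
  set K₁ : ℝ := (m:ℝ) * KG + 1 with hK₁def
  have hK₁ : 0 < K₁ := by positivity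
  set C₁ : ℝ := (Real.exp (K₁ * x) - 1) / K₁ with hC₁def
  have hC₁0 : 0 ≤ C₁ := by
    apply div_nonneg _ hK₁.le
    have : (1:ℝ) ≤ Real.exp (K₁ * x) := Real.one_le_exp (by positivity)
    linarith
  have hgb : ∀ ε0 : ℝ, 0 ≤ ε0 → ∀ y ∈ Icc (0:ℝ) x, gronwallBound 0 K₁ ε0 y ≤ ε0 * C₁ := by
    intro ε0 hε0 y hy
    rw [gronwallBound_of_K_ne_0 hK₁.ne']
    have h1 : Real.exp (K₁ * y) ≤ Real.exp (K₁ * x) :=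
      Real.exp_le_exp.2 (mul_le_mul_of_nonneg_left hy.2 hK₁.le)
    have h2 : (0:ℝ) * Real.exp (K₁*y) + ε0/K₁*(Real.exp (K₁*y)-1)
        ≤ ε0 * ((Real.exp (K₁*x)-1)/K₁) := by
      rw [zero_mul, zero_add, div_mul_eq_mul_div, mul_div_assoc]
      gcongr
    exact h2
  -- multiplication bound
  have hGmul : ∀ y σ : ℝ, (y, σ) ∈ Kc → ∀ Z : Matrix (Fin m) (Fin m) ℂ,
      ‖G y σ * Z‖ ≤ ((m:ℝ) * KG) * ‖Z‖ := by
    intro y σ hp Z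
    calc ‖G y σ * Z‖ ≤ (m:ℝ) * ‖G y σ‖ * ‖Z‖ := Matrix.norm_mul_le'' _ _
      _ ≤ (m:ℝ) * KG * ‖Z‖ := by
          have := hKG (y, σ) hp
          gcongr
  -- bound for W via Grönwall
  set CW : ℝ := ‖(1 : Matrix (Fin m) (Fin m) ℂ)‖ * Real.exp (K₁ * x) with hCWdef
  have hCW0 : 0 ≤ CW := by positivity
  have hWb : ∀ p ∈ Kc, ‖W p.1 p.2‖ ≤ CW := by
    rintro ⟨y, σ⟩ ⟨hy, hσ⟩
    have key := norm_le_gronwallBound_of_norm_deriv_right_le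
      (f := fun u => W u σ) (f' := fun u => G u σ * W u σ) (δ := ‖(1 : Matrix (Fin m) (Fin m) ℂ)‖)
      (K := K₁) (ε := 0) (a := 0) (b := x)
      (fun u hu => (hW u σ (hmemD u σ hu.1 hσ)).continuousAt.continuousWithinAt)
      (fun u hu => (hW u σ (hmemD u σ hu.1 hσ)).hasDerivWithinAt)
      (by show ‖W 0 σ‖ ≤ ‖(1 : Matrix (Fin m) (Fin m) ℂ)‖
          rw [hW0 σ hσ.1 (lt_of_le_of_lt hσ.2 hba)])
      (fun u hu => by
        have h1 := hGmul u σ ⟨⟨hu.1, hu.2.le⟩, hσ⟩ (W u σ)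
        have h2 : ((m:ℝ) * KG) * ‖W u σ‖ ≤ K₁ * ‖W u σ‖ + 0 := by
          rw [hK₁def]; have := norm_nonneg (W u σ); nlinarith
        exact h1.trans h2)
      y hy
    rw [sub_zero, gronwallBound_ε0] at key
    have h1 : Real.exp (K₁ * y) ≤ Real.exp (K₁ * x) :=
      Real.exp_le_exp.2 (mul_le_mul_of_nonneg_left hy.2 hK₁.le)
    exact key.trans (mul_le_mul_of_nonneg_left h1 (norm_nonneg _))
  clear_value KG KGt K₁ C₁ CW
  
  -- uniform continuity modulus for G
  have hGec := hec _ hGcK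
  -- equicontinuity of W in the second variable, uniformly in the first
  have hWec : ∀ ε > (0:ℝ), ∃ δ > (0:ℝ), ∀ σ ∈ Icc (0:ℝ) b, ∀ τ ∈ Icc (0:ℝ) b, |σ - τ| ≤ δ →
      ∀ y ∈ Icc (0:ℝ) x, ‖W y σ - W y τ‖ ≤ ε := by
    intro ε hε
    set ε' : ℝ := ε / ((m:ℝ) * CW * C₁ + 1) with hε'def
    have hXnn : (0:ℝ) ≤ (m:ℝ) * CW * C₁ :=
      mul_nonneg (mul_nonneg (Nat.cast_nonneg m) hCW0) hC₁0
    have hε'pos : 0 < ε' := by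
      rw [hε'def]
      exact div_pos hε (by linarith)
    obtain ⟨δ, hδ0, hδ⟩ := hGec ε' hε'pos
    refine ⟨δ, hδ0, fun σ hσ τ hτ hστ y hy => ?_⟩
    have hdist : ∀ u : ℝ, dist ((u,σ) : ℝ × ℝ) ((u,τ) : ℝ × ℝ) ≤ δ := by
      intro u
      rw [Prod.dist_eq]
      simp only [dist_self]
      refine max_le hδ0.le ?_
      rw [Real.dist_eq]; exact hστ
    have key := norm_le_gronwallBound_of_norm_deriv_right_le
      (f := fun u => W u σ - W u τ)
      (f' := fun u => G u σ * W u σ - G u τ * W u τ) (δ := 0) (K := K₁)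
      (ε := (m:ℝ) * ε' * CW) (a := 0) (b := x)
      (fun u hu => ((hW u σ (hmemD u σ hu.1 hσ)).continuousAt.sub
        (hW u τ (hmemD u τ hu.1 hτ)).continuousAt).continuousWithinAt)
      (fun u hu => ((hW u σ (hmemD u σ hu.1 hσ)).sub
        (hW u τ (hmemD u τ hu.1 hτ))).hasDerivWithinAt)
      (by show ‖W 0 σ - W 0 τ‖ ≤ 0
          rw [hW0 σ hσ.1 (lt_of_le_of_lt hσ.2 hba), hW0 τ hτ.1 (lt_of_le_of_lt hτ.2 hba),
            sub_self, norm_zero])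
      (fun u hu => by
        show ‖G u σ * W u σ - G u τ * W u τ‖ ≤ K₁ * ‖W u σ - W u τ‖ + (m:ℝ) * ε' * CW
        have hum : (u, σ) ∈ Kc := ⟨⟨hu.1, hu.2.le⟩, hσ⟩
        have hum' : (u, τ) ∈ Kc := ⟨⟨hu.1, hu.2.le⟩, hτ⟩
        have hrw : G u σ * W u σ - G u τ * W u τ
            = G u σ * (W u σ - W u τ) + (G u σ - G u τ) * W u τ := by noncomm_ring
        rw [hrw]
        have h1 := hGmul u σ hum (W u σ - W u τ)
        have h2 : ‖(G u σ - G u τ) * W u τ‖ ≤ (m:ℝ) * ε' * CW := by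
          calc ‖(G u σ - G u τ) * W u τ‖ ≤ (m:ℝ) * ‖G u σ - G u τ‖ * ‖W u τ‖ :=
              Matrix.norm_mul_le'' _ _
            _ ≤ (m:ℝ) * ε' * CW := by
                have ha1 := hδ (u,σ) hum (u,τ) hum' (hdist u)
                have ha2 := hWb (u,τ) hum'
                gcongr
        calc ‖G u σ * (W u σ - W u τ) + (G u σ - G u τ) * W u τ‖
            ≤ ‖G u σ * (W u σ - W u τ)‖ + ‖(G u σ - G u τ) * W u τ‖ := norm_add_le _ _
          _ ≤ K₁ * ‖W u σ - W u τ‖ + (m:ℝ) * ε' * CW := by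
              have h3 : ‖G u σ * (W u σ - W u τ)‖ ≤ K₁ * ‖W u σ - W u τ‖ := by
                refine h1.trans ?_
                have h4 := norm_nonneg (W u σ - W u τ)
                rw [hK₁def]
                have h5 : (0:ℝ) ≤ (m:ℝ) * KG := mul_nonneg (Nat.cast_nonneg m) hKG0
                nlinarith
              linarith)
      y hy
    have h4 := hgb ((m:ℝ) * ε' * CW)
      (mul_nonneg (mul_nonneg (Nat.cast_nonneg m) hε'pos.le) hCW0) y hy
    rw [sub_zero] at key
    refine key.trans (h4.trans ?_)
    calc (m:ℝ) * ε' * CW * C₁ = ε * (((m:ℝ)*CW*C₁)/((m:ℝ)*CW*C₁+1)) := by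
          rw [hε'def]; ring
      _ ≤ ε * 1 := by
          have h8 : ((m:ℝ)*CW*C₁)/((m:ℝ)*CW*C₁+1) ≤ 1 := by
            rw [div_le_one (by linarith)]; linarith
          nlinarith
      _ = ε := mul_one ε
  -- joint continuity of W on Kc
  have hWcK : ContinuousOn (fun p : ℝ × ℝ => W p.1 p.2) Kc := by
    rw [Metric.continuousOn_iff]
    rintro ⟨y₀, σ₀⟩ ⟨hy₀, hσ₀⟩ ε hε
    obtain ⟨δ₁, hδ₁0, hδ₁⟩ := hWec (ε/3) (by positivity)
    have hcy : ContinuousAt (fun u => W u σ₀) y₀ :=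
      (hW y₀ σ₀ (hmemD y₀ σ₀ hy₀.1 hσ₀)).continuousAt
    rw [Metric.continuousAt_iff] at hcy
    obtain ⟨δ₂, hδ₂0, hδ₂⟩ := hcy (ε/3) (by positivity)
    refine ⟨min δ₁ δ₂, by positivity, ?_⟩
    rintro ⟨y, σ⟩ ⟨hy, hσ⟩ hd
    rw [Prod.dist_eq, max_lt_iff] at hd
    obtain ⟨hd1, hd2⟩ := hd
    have h1 : ‖W y σ - W y σ₀‖ ≤ ε/3 := by
      apply hδ₁ σ hσ σ₀ hσ₀ _ y hy
      rw [Real.dist_eq] at hd2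
      exact le_of_lt (lt_of_lt_of_le hd2 (min_le_left _ _))
    have h2 : dist (W y σ₀) (W y₀ σ₀) < ε/3 := hδ₂ (lt_of_lt_of_le hd1 (min_le_right _ _))
    calc dist (W y σ) (W y₀ σ₀) ≤ dist (W y σ) (W y σ₀) + dist (W y σ₀) (W y₀ σ₀) :=
        dist_triangle _ _ _
      _ < ε := by rw [dist_eq_norm]; linarith
  -- the auxiliary functions H and Φ
  set H : ℝ → ℝ → Matrix (Fin m) (Fin m) ℂ := fun y σ => F y σ * W y σ - W y σ * F 0 σ
    with hHdef
  set Φ : ℝ → ℝ → Matrix (Fin m) (Fin m) ℂ := fun y σ => Gt y σ * W y σ + G y σ * H y σ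
    with hΦdef
  have hF0cK : ContinuousOn (fun p : ℝ × ℝ => F 0 p.2) Kc := by
    have hmap : MapsTo (fun p : ℝ × ℝ => ((0:ℝ), p.2)) Kc D := fun p hp => hmemD 0 p.2 le_rfl hp.2
    exact hFc.comp (Continuous.continuousOn (by fun_prop)) hmap
  have hHcK : ContinuousOn (fun p : ℝ × ℝ => H p.1 p.2) Kc :=
    (hFcK.matmul hWcK).sub (hWcK.matmul hF0cK)
  have hΦcK : ContinuousOn (fun p : ℝ × ℝ => Φ p.1 p.2) Kc :=
    (hGtcK.matmul hWcK).add (hGcK.matmul hHcK)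
  obtain ⟨CH, hCH⟩ := hKc.exists_bound_of_continuousOn hHcK
  set KH : ℝ := max CH 0 with hKHdef
  have hKH0 : 0 ≤ KH := le_max_right _ _
  have hKH : ∀ p ∈ Kc, ‖H p.1 p.2‖ ≤ KH := fun p hp => (hCH p hp).trans (le_max_left _ _)
  clear_value KH
  have hΦec := hec _ hΦcK
  -- sectional continuity helpers
  have hcomp1 : ∀ (f : ℝ × ℝ → Matrix (Fin m) (Fin m) ℂ), ContinuousOn f Kc →
      ∀ y ∈ Icc (0:ℝ) x, ContinuousOn (fun σ => f (y, σ)) (Icc 0 b) := by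
    intro f hf y hy
    exact hf.comp (Continuous.continuousOn (by fun_prop)) (fun σ hσ => ⟨hy, hσ⟩)
  have hcomp2 : ∀ (f : ℝ × ℝ → Matrix (Fin m) (Fin m) ℂ), ContinuousOn f Kc →
      ∀ σ ∈ Icc (0:ℝ) b, ContinuousOn (fun u => f (u, σ)) (Icc 0 x) := by
    intro f hf σ hσ
    exact hf.comp (Continuous.continuousOn (by fun_prop)) (fun u hu => ⟨hu, hσ⟩)
  have hii : ∀ (f : ℝ × ℝ → Matrix (Fin m) (Fin m) ℂ), ContinuousOn f Kc →
      ∀ y ∈ Icc (0:ℝ) x, ∀ s ∈ Icc (0:ℝ) b,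
        IntervalIntegrable (fun σ => f (y, σ)) volume t s :=
    fun f hf y hy s hs => ((hcomp1 f hf y hy).mono (huIcc s hs)).intervalIntegrable
  
  -- FTC for G in the second variable
  have hGint : ∀ y ∈ Icc (0:ℝ) x, ∀ s ∈ Icc (0:ℝ) b,
      (∫ σ in t..s, Gt y σ) = G y s - G y t := by
    intro y hy s hs
    refine intervalIntegral.integral_eq_sub_of_hasDerivAt ?_ ?_
    · intro σ hσ
      exact hGt y σ (hmemD y σ hy.1 (huIcc s hs hσ))
    · exact hii _ hGtcK y hy s hs
  -- derivative of H in the first variable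
  have hHder : ∀ σ ∈ Icc (0:ℝ) b, ∀ u : ℝ, 0 ≤ u →
      HasDerivAt (fun v => H v σ) (Φ u σ) u := by
    intro σ hσ u hu
    have hmem : (u, σ) ∈ D := hmemD u σ hu hσ
    have h1 : HasDerivAt (fun v => F v σ * W v σ)
        (Fx u σ * W u σ + F u σ * (G u σ * W u σ)) u :=
      (hFx u σ hmem).matmul (hW u σ hmem)
    have h2 : HasDerivAt (fun v => W v σ * F 0 σ)
        ((G u σ * W u σ) * F 0 σ + W u σ * 0) u :=
      (hW u σ hmem).matmul (hasDerivAt_const u (F 0 σ))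
    have h3 := h1.sub h2
    have heq : Fx u σ * W u σ + F u σ * (G u σ * W u σ)
        - ((G u σ * W u σ) * F 0 σ + W u σ * 0) = Φ u σ := by
      rw [hFxeq u σ hmem]
      show _ = Gt u σ * W u σ + G u σ * (F u σ * W u σ - W u σ * F 0 σ)
      noncomm_ring
    rw [heq] at h3
    exact h3
  -- the primitives in the second variable
  set P : ℝ → ℝ → Matrix (Fin m) (Fin m) ℂ := fun s y => ∫ σ in t..s, H y σ with hPdef
  set Q : ℝ → ℝ → Matrix (Fin m) (Fin m) ℂ := fun s y => ∫ σ in t..s, Φ y σ with hQdef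
  have hPsub : ∀ s ∈ Icc (0:ℝ) b, ∀ y ∈ Icc (0:ℝ) x, ∀ z ∈ Icc (0:ℝ) x,
      P s z - P s y - (z - y) • Q s y
        = ∫ σ in t..s, ((∫ u in y..z, Φ u σ) - (z - y) • Φ y σ) := by
    intro s hs y hy z hz
    have hiz : IntervalIntegrable (fun σ => H z σ) volume t s := hii _ hHcK z hz s hs
    have hiy : IntervalIntegrable (fun σ => H y σ) volume t s := hii _ hHcK y hy s hs
    have hiΦ : IntervalIntegrable (fun σ => Φ y σ) volume t s := hii _ hΦcK y hy s hs
    have h1 : (∫ σ in t..s, (H z σ - H y σ - (z - y) • Φ y σ))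
        = P s z - P s y - (z - y) • Q s y := by
      have hiΦs : IntervalIntegrable (fun σ => (z - y) • Φ y σ) volume t s := hiΦ.smul (z - y)
      rw [intervalIntegral.integral_sub (hiz.sub hiy) hiΦs,
        intervalIntegral.integral_sub hiz hiy, intervalIntegral.integral_smul]
    rw [← h1]
    apply intervalIntegral.integral_congr
    intro σ hσ
    have hσb : σ ∈ Icc (0:ℝ) b := huIcc s hs hσ
    have hftc : (∫ u in y..z, Φ u σ) = H z σ - H y σ := by
      refine intervalIntegral.integral_eq_sub_of_hasDerivAt
        (f := fun u => H u σ) (f' := fun u => Φ u σ) ?_ ?_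
      · intro u hu
        exact hHder σ hσb u (huIccx y hy z hz hu).1
      · exact ((hcomp2 _ hΦcK σ hσb).mono (huIccx y hy z hz)).intervalIntegrable
    show H z σ - H y σ - (z - y) • Φ y σ = (∫ u in y..z, Φ u σ) - (z - y) • Φ y σ
    rw [hftc]
  -- derivative of the primitive in the first variable
  have hPder : ∀ s ∈ Icc (0:ℝ) b, ∀ y ∈ Icc (0:ℝ) x,
      HasDerivWithinAt (P s) (Q s y) (Icc 0 x) y := by
    intro s hs y hy
    rw [hasDerivWithinAt_iff_isLittleO, Asymptotics.isLittleO_iff]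
    intro c hc
    set ε' : ℝ := c / (|s - t| + 1) with hε'def
    have hε'0 : 0 < ε' := by positivity
    obtain ⟨δ, hδ0, hδ⟩ := hΦec ε' hε'0
    rw [Filter.eventually_iff, Metric.mem_nhdsWithin_iff]
    refine ⟨δ, hδ0, ?_⟩
    rintro z ⟨hzb, hzx⟩
    rw [Metric.mem_ball, Real.dist_eq] at hzb
    show ‖P s z - P s y - (z - y) • Q s y‖ ≤ c * ‖z - y‖
    rw [hPsub s hs y hy z hzx]
    have hb1 : ∀ σ ∈ uIoc t s, ‖(∫ u in y..z, Φ u σ) - (z - y) • Φ y σ‖ ≤ ε' * |z - y| := by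
      intro σ hσ
      have hσb : σ ∈ Icc (0:ℝ) b := huIcc s hs (uIoc_subset_uIcc hσ)
      have hiΦ2 : IntervalIntegrable (fun u => Φ u σ) volume y z :=
        ((hcomp2 _ hΦcK σ hσb).mono (huIccx y hy z hzx)).intervalIntegrable
      have hrw : (∫ u in y..z, Φ u σ) - (z - y) • Φ y σ = ∫ u in y..z, (Φ u σ - Φ y σ) := by
        rw [intervalIntegral.integral_sub hiΦ2 intervalIntegrable_const,
          intervalIntegral.integral_const]
      rw [hrw]
      refine intervalIntegral.norm_integral_le_of_norm_le_const ?_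
      intro u hu
      have hux : u ∈ Icc (0:ℝ) x := huIccx y hy z hzx (uIoc_subset_uIcc hu)
      have hd : dist ((u,σ) : ℝ × ℝ) ((y,σ) : ℝ × ℝ) ≤ δ := by
        rw [Prod.dist_eq]
        have h5 : |u - y| ≤ |z - y| := abs_sub_left_of_mem_uIcc (uIoc_subset_uIcc hu)
        have h5' : dist u y ≤ δ := by rw [Real.dist_eq]; linarith
        simp only [dist_self]
        exact max_le h5' hδ0.le
      exact hδ (u,σ) ⟨hux, hσb⟩ (y,σ) ⟨hy, hσb⟩ hd
    have h6 := intervalIntegral.norm_integral_le_of_norm_le_const hb1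
    refine h6.trans ?_
    rw [Real.norm_eq_abs]
    have h7 : ε' * |s - t| ≤ c := by
      rw [hε'def]
      calc c / (|s-t|+1) * |s-t| = c * (|s-t|/(|s-t|+1)) := by ring
        _ ≤ c * 1 := by
            have h8 : |s-t|/(|s-t|+1) ≤ 1 := by
              rw [div_le_one (by positivity)]; linarith [abs_nonneg (s-t)]
            nlinarith
        _ = c := mul_one c
    nlinarith [abs_nonneg (z - y), abs_nonneg (s - t), hε'0.le]
  
  -- the key Grönwall estimate for N(y) = W y s - W y t - P s y
  have hNkey : ∀ s ∈ Icc (0:ℝ) b, ∀ ε₁ εG : ℝ, 0 ≤ ε₁ → 0 ≤ εG →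
      (∀ σ ∈ uIcc t s, ∀ u ∈ Icc (0:ℝ) x, ‖W u t - W u σ‖ ≤ ε₁) →
      (∀ σ ∈ uIcc t s, ∀ u ∈ Icc (0:ℝ) x, ‖G u s - G u σ‖ ≤ εG) →
      ‖W x s - W x t - P s x‖
        ≤ (((m:ℝ) * KGt * ε₁ + (m:ℝ) * εG * KH) * |s - t|) * C₁ := by
    intro s hs ε₁ εG hε₁0 hεG0 hε₁ hεG
    set ε₀ : ℝ := ((m:ℝ) * KGt * ε₁ + (m:ℝ) * εG * KH) * |s - t| with hε₀def
    have hε₀0 : 0 ≤ ε₀ := by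
      rw [hε₀def]
      exact mul_nonneg (add_nonneg
        (mul_nonneg (mul_nonneg (Nat.cast_nonneg m) hKGt0) hε₁0)
        (mul_nonneg (mul_nonneg (Nat.cast_nonneg m) hεG0) hKH0)) (abs_nonneg _)
    have hNder : ∀ u ∈ Icc (0:ℝ) x, HasDerivWithinAt
        (fun v => W v s - W v t - P s v)
        (G u s * W u s - G u t * W u t - Q s u) (Icc 0 x) u := fun u hu =>
      (((hW u s (hmemD u s hu.1 hs)).hasDerivWithinAt.sub
        (hW u t (hmemD u t hu.1 htmem)).hasDerivWithinAt).sub (hPder s hs u hu))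
    have hEbd : ∀ u ∈ Ico (0:ℝ) x,
        ‖G u s * W u s - G u t * W u t - Q s u‖
          ≤ K₁ * ‖W u s - W u t - P s u‖ + ε₀ := by
      intro u hu
      have hux : u ∈ Icc (0:ℝ) x := ⟨hu.1, hu.2.le⟩
      have hiGt : IntervalIntegrable (fun σ => Gt u σ) volume t s := hii _ hGtcK u hux s hs
      have hiH : IntervalIntegrable (fun σ => H u σ) volume t s := hii _ hHcK u hux s hs
      have hI1 : IntervalIntegrable (fun σ => Gt u σ * W u t) volume t s :=
        (((hcomp1 _ hGtcK u hux).matmul continuousOn_const).mono (huIcc s hs)).intervalIntegrable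
      have hI2 : IntervalIntegrable (fun σ => Gt u σ * W u σ) volume t s :=
        (((hcomp1 _ hGtcK u hux).matmul (hcomp1 _ hWcK u hux)).mono
          (huIcc s hs)).intervalIntegrable
      have hI3 : IntervalIntegrable (fun σ => G u s * H u σ) volume t s :=
        ((continuousOn_const.matmul (hcomp1 _ hHcK u hux)).mono (huIcc s hs)).intervalIntegrable
      have hI4 : IntervalIntegrable (fun σ => G u σ * H u σ) volume t s :=
        (((hcomp1 _ hGcK u hux).matmul (hcomp1 _ hHcK u hux)).mono
          (huIcc s hs)).intervalIntegrable
      have e1 : (∫ σ in t..s, Gt u σ) * W u t = ∫ σ in t..s, Gt u σ * W u t := by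
        have e1' := ContinuousLinearMap.intervalIntegral_comp_comm
          ((Matrix.mulLW m).flip (W u t)) hiGt
        exact e1'.symm
      have e2 : G u s * P s u = ∫ σ in t..s, G u s * H u σ := by
        have e2' := ContinuousLinearMap.intervalIntegral_comp_comm
          (Matrix.mulLW m (G u s)) hiH
        exact e2'.symm
      have e4 : Q s u = (∫ σ in t..s, Gt u σ * W u σ) + (∫ σ in t..s, G u σ * H u σ) := by
        show (∫ σ in t..s, Φ u σ) = _
        rw [← intervalIntegral.integral_add hI2 hI4]
      have hErw : G u s * W u s - G u t * W u t - Q s u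
          = G u s * (W u s - W u t - P s u)
            + ∫ σ in t..s, (Gt u σ * (W u t - W u σ) + (G u s - G u σ) * H u σ) := by
        have e0 : EqOn (fun σ => Gt u σ * (W u t - W u σ) + (G u s - G u σ) * H u σ)
            (fun σ => (Gt u σ * W u t - Gt u σ * W u σ) + (G u s * H u σ - G u σ * H u σ))
            (uIcc t s) := fun σ _ => by noncomm_ring
        rw [intervalIntegral.integral_congr e0,
          intervalIntegral.integral_add (hI1.sub hI2) (hI3.sub hI4),
          intervalIntegral.integral_sub hI1 hI2, intervalIntegral.integral_sub hI3 hI4,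
          ← e1, ← e2, hGint u hux s hs, e4]
        noncomm_ring
      rw [hErw]
      have hGNs : ‖G u s * (W u s - W u t - P s u)‖ ≤ K₁ * ‖W u s - W u t - P s u‖ := by
        refine (hGmul u s ⟨hux, hs⟩ _).trans ?_
        have h4 := norm_nonneg (W u s - W u t - P s u)
        rw [hK₁def]
        have h5 : (0:ℝ) ≤ (m:ℝ) * KG := mul_nonneg (Nat.cast_nonneg m) hKG0
        nlinarith
      have hE : ‖∫ σ in t..s, (Gt u σ * (W u t - W u σ) + (G u s - G u σ) * H u σ)‖ ≤ ε₀ := by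
        rw [hε₀def]
        refine intervalIntegral.norm_integral_le_of_norm_le_const ?_
        intro σ hσ
        have hσu : σ ∈ uIcc t s := uIoc_subset_uIcc hσ
        have hσb : σ ∈ Icc (0:ℝ) b := huIcc s hs hσu
        have hb1 : ‖Gt u σ * (W u t - W u σ)‖ ≤ (m:ℝ) * KGt * ε₁ := by
          calc ‖Gt u σ * (W u t - W u σ)‖ ≤ (m:ℝ) * ‖Gt u σ‖ * ‖W u t - W u σ‖ :=
              Matrix.norm_mul_le'' _ _
            _ ≤ (m:ℝ) * KGt * ε₁ := by
                have hb3 := hKGt (u, σ) ⟨hux, hσb⟩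
                have hb4 := hε₁ σ hσu u hux
                gcongr
        have hb2 : ‖(G u s - G u σ) * H u σ‖ ≤ (m:ℝ) * εG * KH := by
          calc ‖(G u s - G u σ) * H u σ‖ ≤ (m:ℝ) * ‖G u s - G u σ‖ * ‖H u σ‖ :=
              Matrix.norm_mul_le'' _ _
            _ ≤ (m:ℝ) * εG * KH := by
                have hb3 := hKH (u, σ) ⟨hux, hσb⟩
                have hb4 := hεG σ hσu u hux
                gcongr
        calc ‖Gt u σ * (W u t - W u σ) + (G u s - G u σ) * H u σ‖
            ≤ ‖Gt u σ * (W u t - W u σ)‖ + ‖(G u s - G u σ) * H u σ‖ := norm_add_le _ _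
          _ ≤ (m:ℝ) * KGt * ε₁ + (m:ℝ) * εG * KH := by linarith
      calc ‖G u s * (W u s - W u t - P s u)
            + ∫ σ in t..s, (Gt u σ * (W u t - W u σ) + (G u s - G u σ) * H u σ)‖
          ≤ ‖G u s * (W u s - W u t - P s u)‖
            + ‖∫ σ in t..s, (Gt u σ * (W u t - W u σ) + (G u s - G u σ) * H u σ)‖ :=
            norm_add_le _ _
        _ ≤ K₁ * ‖W u s - W u t - P s u‖ + ε₀ := by linarith
    have hP0 : P s 0 = 0 := by
      show (∫ σ in t..s, H 0 σ) = 0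
      have e5 : EqOn (fun σ => H 0 σ) (fun _ => (0 : Matrix (Fin m) (Fin m) ℂ)) (uIcc t s) := by
        intro σ hσ
        have hσb : σ ∈ Icc (0:ℝ) b := huIcc s hs hσ
        show F 0 σ * W 0 σ - W 0 σ * F 0 σ = 0
        rw [hW0 σ hσb.1 (lt_of_le_of_lt hσb.2 hba), mul_one, one_mul, sub_self]
      rw [intervalIntegral.integral_congr e5]
      simp
    have key := norm_le_gronwallBound_of_norm_deriv_right_le
      (f := fun v => W v s - W v t - P s v)
      (f' := fun u => G u s * W u s - G u t * W u t - Q s u) (δ := 0) (K := K₁)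
      (ε := ε₀) (a := 0) (b := x)
      (fun u hu => (hNder u hu).continuousWithinAt)
      (fun u hu => (hNder u ⟨hu.1, hu.2.le⟩).mono_of_mem_nhdsWithin (Icc_mem_nhdsGE_of_mem hu))
      (by show ‖W 0 s - W 0 t - P s 0‖ ≤ 0
          rw [hP0, hW0 s hs.1 (lt_of_le_of_lt hs.2 hba), hW0 t ht hta]
          simp)
      hEbd x hxmem
    rw [sub_zero] at key
    exact key.trans (hgb ε₀ hε₀0 x hxmem)
  
  -- conclusion: s ↦ W x s has derivative H x t at t (within Icc 0 b)
  have hHWd : HasDerivWithinAt (fun s => W x s) (H x t) (Icc (0:ℝ) b) t := by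
    rw [hasDerivWithinAt_iff_isLittleO, Asymptotics.isLittleO_iff]
    intro c hc
    set ε₁ : ℝ := c / (3 * ((m:ℝ) * KGt * C₁ + 1)) with hε₁def
    set εG : ℝ := c / (3 * ((m:ℝ) * KH * C₁ + 1)) with hεGdef
    have hXa : (0:ℝ) ≤ (m:ℝ) * KGt * C₁ :=
      mul_nonneg (mul_nonneg (Nat.cast_nonneg m) hKGt0) hC₁0
    have hXb : (0:ℝ) ≤ (m:ℝ) * KH * C₁ :=
      mul_nonneg (mul_nonneg (Nat.cast_nonneg m) hKH0) hC₁0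
    have hε₁0 : 0 < ε₁ := by
      rw [hε₁def]; exact div_pos hc (by linarith)
    have hεG0 : 0 < εG := by
      rw [hεGdef]; exact div_pos hc (by linarith)
    obtain ⟨δ₁, hδ₁0, hδ₁⟩ := hWec ε₁ hε₁0
    obtain ⟨δ₂, hδ₂0, hδ₂⟩ := hGec εG hεG0
    have hHct : ContinuousWithinAt (fun σ => H x σ) (Icc (0:ℝ) b) t :=
      (hcomp1 _ hHcK x hxmem) t htmem
    rw [Metric.continuousWithinAt_iff] at hHct
    obtain ⟨δ₃, hδ₃0, hδ₃⟩ := hHct (c/3) (by positivity)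
    rw [Filter.eventually_iff, Metric.mem_nhdsWithin_iff]
    refine ⟨min δ₁ (min δ₂ δ₃), by positivity, ?_⟩
    rintro s ⟨hsb', hsb⟩
    rw [Metric.mem_ball, Real.dist_eq] at hsb'
    show ‖W x s - W x t - (s - t) • H x t‖ ≤ c * ‖s - t‖
    have hst1 : |s - t| ≤ δ₁ := le_of_lt (lt_of_lt_of_le hsb' (min_le_left _ _))
    have hst2 : |s - t| ≤ δ₂ :=
      le_of_lt (lt_of_lt_of_le hsb' ((min_le_right _ _).trans (min_le_left _ _)))
    have hst3 : |s - t| < δ₃ :=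
      lt_of_lt_of_le hsb' ((min_le_right _ _).trans (min_le_right _ _))
    have hA := hNkey s hsb ε₁ εG hε₁0.le hεG0.le
      (fun σ hσ u hu => by
        apply hδ₁ t htmem σ (huIcc s hsb hσ) _ u hu
        have h9 := abs_sub_left_of_mem_uIcc hσ
        rw [abs_sub_comm]
        linarith)
      (fun σ hσ u hu => by
        have hσb : σ ∈ Icc (0:ℝ) b := huIcc s hsb hσ
        have h9 := abs_sub_right_of_mem_uIcc hσ
        have hd : dist ((u, s) : ℝ × ℝ) ((u, σ) : ℝ × ℝ) ≤ δ₂ := by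
          rw [Prod.dist_eq]
          simp only [dist_self]
          refine max_le hδ₂0.le ?_
          rw [Real.dist_eq]
          linarith
        exact hδ₂ (u, s) ⟨hu, hsb⟩ (u, σ) ⟨hu, hσb⟩ hd)
    have hB : ‖P s x - (s - t) • H x t‖ ≤ (c/3) * |s - t| := by
      have hiHx : IntervalIntegrable (fun σ => H x σ) volume t s := hii _ hHcK x hxmem s hsb
      have hBrw : P s x - (s - t) • H x t = ∫ σ in t..s, (H x σ - H x t) := by
        rw [intervalIntegral.integral_sub hiHx intervalIntegrable_const,
          intervalIntegral.integral_const]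
      rw [hBrw]
      refine intervalIntegral.norm_integral_le_of_norm_le_const ?_
      intro σ hσ
      have hσu := uIoc_subset_uIcc hσ
      have hσb : σ ∈ Icc (0:ℝ) b := huIcc s hsb hσu
      have hd : dist σ t < δ₃ := by
        rw [Real.dist_eq]
        have h9 := abs_sub_left_of_mem_uIcc hσu
        linarith
      have h10 := hδ₃ hσb hd
      rw [dist_eq_norm] at h10
      exact h10.le
    have hsplit : W x s - W x t - (s - t) • H x t
        = (W x s - W x t - P s x) + (P s x - (s - t) • H x t) := by abel
    rw [hsplit, Real.norm_eq_abs]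
    have k1 : (m:ℝ) * KGt * ε₁ * C₁ ≤ c/3 := by
      have h8 : ((m:ℝ)*KGt*C₁)/((m:ℝ)*KGt*C₁+1) ≤ 1 := by
        rw [div_le_one (by linarith)]
        linarith
      calc (m:ℝ) * KGt * ε₁ * C₁
          = ((m:ℝ)*KGt*C₁) * c / (3 * ((m:ℝ)*KGt*C₁ + 1)) := by rw [hε₁def]; ring
        _ ≤ c/3 := by
            rw [div_le_div_iff₀ (by linarith) (by norm_num)]
            nlinarith
    have k2 : (m:ℝ) * εG * KH * C₁ ≤ c/3 := by
      have h8 : ((m:ℝ)*KH*C₁)/((m:ℝ)*KH*C₁+1) ≤ 1 := by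
        rw [div_le_one (by linarith)]
        linarith
      calc (m:ℝ) * εG * KH * C₁
          = ((m:ℝ)*KH*C₁) * c / (3 * ((m:ℝ)*KH*C₁ + 1)) := by rw [hεGdef]; ring
        _ ≤ c/3 := by
            rw [div_le_div_iff₀ (by linarith) (by norm_num)]
            nlinarith
    have k3 : ((m:ℝ)*KGt*ε₁ + (m:ℝ)*εG*KH) * C₁ ≤ 2*c/3 := by nlinarith
    have k4 : (((m:ℝ)*KGt*ε₁ + (m:ℝ)*εG*KH) * |s-t|) * C₁ ≤ (2*c/3) * |s-t| := by
      have k5 := mul_le_mul_of_nonneg_right k3 (abs_nonneg (s-t))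
      nlinarith
    calc ‖(W x s - W x t - P s x) + (P s x - (s - t) • H x t)‖
        ≤ ‖W x s - W x t - P s x‖ + ‖P s x - (s - t) • H x t‖ := norm_add_le _ _
      _ ≤ (((m:ℝ)*KGt*ε₁ + (m:ℝ)*εG*KH) * |s - t|) * C₁ + (c/3) * |s - t| := by linarith
      _ ≤ c * |s - t| := by linarith
  have huniq : UniqueDiffWithinAt ℝ (Icc (0:ℝ) b) t := (uniqueDiffOn_Icc hb0) t htmem
  have h1 := (hWt x t hxt).hasDerivWithinAt (s := Icc (0:ℝ) b)
  have hWteq : Wt x t = H x t := by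
    rw [← h1.derivWithin huniq, ← hHWd.derivWithin huniq]
  rw [hWteq]
  show F x t * W x t - W x t * F 0 t - F x t * W x t = -(W x t * F 0 t)
  abel
end

section
/- Let j be an m × m Hermitian involution and F : ℝ → Matrix (Fin m) (Fin m) ℂ continuous with F(t)*·j + j·F(t) ≤ 0 (i.e. -(F(t)*j + jF(t)) is positive semidefinite) for all t ≥ 0. Let R solve dR/dt = F·R, R(0) = I. Then R(t)*·j·R(t) ≤ j for all t ≥ 0, i.e. j - R(t)* j R(t) is positive semidefinite. -/
open Matrix
open scoped ComplexOrder

attribute [local instance] Matrix.normedAddCommGroup Matrix.normedSpace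

/-- If `j` is a Hermitian involution, `F(t)* j + j F(t) ≤ 0` for `t ≥ 0`, and
`R' = F R`, `R(0) = I`, then `R(t)* j R(t) ≤ j` for all `t ≥ 0`. -/
theorem j_contractive_evolution (m : ℕ)
    (j : Matrix (Fin m) (Fin m) ℂ) (hj : jᴴ = j) (hj2 : j * j = 1)
    (F R : ℝ → Matrix (Fin m) (Fin m) ℂ)
    (hFc : Continuous F)
    (hFdiss : ∀ t : ℝ, 0 ≤ t → (-((F t)ᴴ * j + j * F t)).PosSemidef)
    (hR : ∀ t : ℝ, HasDerivAt R (F t * R t) t)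
    (hR0 : R 0 = 1) :
    ∀ t : ℝ, 0 ≤ t → (j - (R t)ᴴ * j * (R t)).PosSemidef := by
  intro t ht
  have hHerm : (j - (R t)ᴴ * j * R t).IsHermitian := by
    unfold Matrix.IsHermitian
    simp [conjTranspose_sub, conjTranspose_mul, hj, Matrix.mul_assoc]
  refine Matrix.PosSemidef.of_dotProduct_mulVec_nonneg hHerm (fun x => ?_)
  -- v s = R s *ᵥ x
  set v : ℝ → Fin m → ℂ := fun s => R s *ᵥ x with hvdef
  set g : ℝ → ℂ := fun s => star (v s) ⬝ᵥ (j *ᵥ v s) with hgdef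
  -- entry derivatives
  have hRij : ∀ (s : ℝ) (a b : Fin m), HasDerivAt (fun u => R u a b) ((F s * R s) a b) s :=
    fun s a b => (hasDerivAt_pi.mp (hasDerivAt_pi.mp (hR s) a)) b
  -- component derivatives of v
  have hvi : ∀ (s : ℝ) (i : Fin m), HasDerivAt (fun u => v u i) ((F s *ᵥ v s) i) s := by
    intro s i
    have h1 : HasDerivAt (fun u => ∑ k, R u i k * x k) (∑ k, (F s * R s) i k * x k) s :=
      HasDerivAt.fun_sum (fun k _ => (hRij s i k).mul_const (x k))
    have e1 : (fun u => v u i) = fun u => ∑ k, R u i k * x k := by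
      funext u; simp [hvdef, Matrix.mulVec, dotProduct]
    have e2 : (F s *ᵥ v s) i = ∑ k, (F s * R s) i k * x k := by
      rw [show v s = R s *ᵥ x from rfl, mulVec_mulVec]
      simp [Matrix.mulVec, dotProduct]
    rw [e1, e2]; exact h1
  -- derivative of g
  have hgd : ∀ s : ℝ, HasDerivAt g
      (star (F s *ᵥ v s) ⬝ᵥ (j *ᵥ v s) + star (v s) ⬝ᵥ (j *ᵥ (F s *ᵥ v s))) s := by
    intro s
    set w : Fin m → ℂ := F s *ᵥ v s with hwdef
    have hterm : ∀ (i k : Fin m), HasDerivAt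
        (fun u => (starRingEnd ℂ) (v u i) * (j i k * v u k))
        ((starRingEnd ℂ) (w i) * (j i k * v s k)
          + (starRingEnd ℂ) (v s i) * (j i k * w k)) s := by
      intro i k
      have hc : HasDerivAt (fun u => (starRingEnd ℂ) (v u i)) ((starRingEnd ℂ) (w i)) s :=
        (Complex.conjCLE.hasFDerivAt).comp_hasDerivAt s (hvi s i)
      exact hc.mul ((hvi s k).const_mul (j i k))
    have hsum : HasDerivAt (fun u => ∑ i, ∑ k, (starRingEnd ℂ) (v u i) * (j i k * v u k))
        (∑ i, ∑ k, ((starRingEnd ℂ) (w i) * (j i k * v s k)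
          + (starRingEnd ℂ) (v s i) * (j i k * w k))) s :=
      HasDerivAt.fun_sum (fun i _ => HasDerivAt.fun_sum (fun k _ => hterm i k))
    have e1 : g = fun u => ∑ i, ∑ k, (starRingEnd ℂ) (v u i) * (j i k * v u k) := by
      funext u
      simp [hgdef, dotProduct, Matrix.mulVec, Finset.mul_sum, Pi.star_apply, RCLike.star_def]
    have e2 : star w ⬝ᵥ (j *ᵥ v s) + star (v s) ⬝ᵥ (j *ᵥ w)
        = ∑ i, ∑ k, ((starRingEnd ℂ) (w i) * (j i k * v s k)
          + (starRingEnd ℂ) (v s i) * (j i k * w k)) := by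
      simp [dotProduct, Matrix.mulVec, Finset.mul_sum, Pi.star_apply, RCLike.star_def,
        Finset.sum_add_distrib]
    rw [e1, e2]; exact hsum
  -- rewrite the derivative as a quadratic form
  have hquad : ∀ s : ℝ, star (F s *ᵥ v s) ⬝ᵥ (j *ᵥ v s) + star (v s) ⬝ᵥ (j *ᵥ (F s *ᵥ v s))
      = star (v s) ⬝ᵥ (((F s)ᴴ * j + j * F s) *ᵥ v s) := by
    intro s
    rw [add_mulVec, dotProduct_add, ← mulVec_mulVec, ← mulVec_mulVec,
      dotProduct_mulVec (star (v s)) (F s)ᴴ, ← star_mulVec, dotProduct_mulVec (star (v s)) j]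
  -- h := re ∘ g is antitone on [0, ∞)
  have hgd' : ∀ s : ℝ, HasDerivAt g (star (v s) ⬝ᵥ (((F s)ᴴ * j + j * F s) *ᵥ v s)) s :=
    fun s => (hquad s) ▸ hgd s
  set h : ℝ → ℝ := fun s => (g s).re with hhdef
  have hhd : ∀ s : ℝ, HasDerivAt h ((star (v s) ⬝ᵥ (((F s)ᴴ * j + j * F s) *ᵥ v s)).re) s :=
    fun s => (Complex.reCLM.hasFDerivAt).comp_hasDerivAt s (hgd' s)
  have hderiv_nonpos : ∀ s ∈ interior (Set.Ici (0:ℝ)), deriv h s ≤ 0 := by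
    intro s hs
    rw [interior_Ici] at hs
    have hs0 : (0:ℝ) ≤ s := le_of_lt hs
    have := (hFdiss s hs0).dotProduct_mulVec_nonneg (v s)
    rw [neg_mulVec, dotProduct_neg] at this
    rw [(hhd s).deriv]
    have him := Complex.le_def.mp this
    simp only [Complex.zero_re, Complex.neg_re] at him
    linarith [him.1]
  have hanti : AntitoneOn h (Set.Ici 0) := by
    refine antitoneOn_of_deriv_nonpos (convex_Ici 0) ?_ ?_ hderiv_nonpos
    · exact fun s _ => ((hhd s).continuousAt).continuousWithinAt
    · exact fun s _ => ((hhd s).differentiableAt).differentiableWithinAt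
  have hht : h t ≤ h 0 := hanti (Set.self_mem_Ici) ht ht
  -- assemble
  set z : ℂ := star x ⬝ᵥ ((j - (R t)ᴴ * j * R t) *ᵥ x) with hzdef
  have key : star x ⬝ᵥ (((R t)ᴴ * j * R t) *ᵥ x) = g t := by
    rw [hgdef]
    simp only [hvdef]
    rw [← mulVec_mulVec, ← mulVec_mulVec, dotProduct_mulVec (star x) (R t)ᴴ, ← star_mulVec]
  have hz : z = star x ⬝ᵥ (j *ᵥ x) - g t := by
    rw [hzdef, sub_mulVec, dotProduct_sub, key]
  have hg0 : g 0 = star x ⬝ᵥ (j *ᵥ x) := by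
    simp [hgdef, hvdef, hR0, one_mulVec]
  -- z is real
  have hzstar : star z = z := by
    have hD : (j - (R t)ᴴ * j * R t)ᴴ = j - (R t)ᴴ * j * R t := hHerm
    calc star z = star (star x ⬝ᵥ ((j - (R t)ᴴ * j * R t) *ᵥ x)) := by rw [hzdef]
    _ = star ((j - (R t)ᴴ * j * R t) *ᵥ x) ⬝ᵥ x := by rw [← star_dotProduct]
    _ = (star x ᵥ* (j - (R t)ᴴ * j * R t)ᴴ) ⬝ᵥ x := by rw [star_mulVec]
    _ = star x ⬝ᵥ ((j - (R t)ᴴ * j * R t)ᴴ *ᵥ x) := by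
        rw [← dotProduct_mulVec]
    _ = z := by rw [hD, hzdef]
  have him : z.im = 0 := Complex.conj_eq_iff_im.mp hzstar
  have hre : 0 ≤ z.re := by
    have : z.re = h 0 - h t := by
      rw [hz, ← hg0]
      simp [hhdef, Complex.sub_re]
    rw [this]; linarith
  rw [hzdef] at him hre ⊢
  exact Complex.le_def.mpr ⟨by simpa using hre, by simpa using him.symm⟩
end

section
/- Let A₁, A₂ be n × n complex matrices, S an invertible n × n matrix, and Π₁, Π₂ n × m matrices satisfying A₁S - SA₂ = Π₁Π₂*. For z not in the spectrum of A₁ nor of A₂, define w_A(z) = I_m - Π₂* S⁻¹ (A₁ - zI)⁻¹ Π₁ and u(z) = I_m + Π₂* (A₂ - zI)⁻¹ S⁻¹ Π₁. Then w_A(z)·u(z) = I_m and u(z)·w_A(z) = I_m; in particular w_A(z) is invertible with inverse u(z). -/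
open Matrix

private lemma mcancel {n : ℕ} {k : Type*} {A B : Matrix (Fin n) (Fin n) ℂ}
    (h : A * B = 1) (X : Matrix (Fin n) k ℂ) : A * (B * X) = X := by
  rw [← Matrix.mul_assoc, h, Matrix.one_mul]

/-- Explicit inverse of the transfer matrix function: if `A₁S - SA₂ = Pi1Pi2*`, `S` is
invertible and `z ∉ σ(A₁) ∪ σ(A₂)`, then
`w_A(z) = I - Pi2* S⁻¹ (A₁ - zI)⁻¹ Pi1` is invertible with inverse
`u(z) = I + Pi2* (A₂ - zI)⁻¹ S⁻¹ Pi1`. -/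
theorem transfer_matrix_inverse (n m : ℕ)
    (A₁ A₂ S : Matrix (Fin n) (Fin n) ℂ)
    (Pi1 Pi2 : Matrix (Fin n) (Fin m) ℂ)
    (hS : IsUnit S)
    (hnode : A₁ * S - S * A₂ = Pi1 * Pi2ᴴ)
    (z : ℂ)
    (hz₁ : z ∉ spectrum ℂ A₁)
    (hz₂ : z ∉ spectrum ℂ A₂)
    (wA u : Matrix (Fin m) (Fin m) ℂ)
    (hwA : wA = 1 - Pi2ᴴ * S⁻¹ * (A₁ - z • 1)⁻¹ * Pi1)
    (hu : u = 1 + Pi2ᴴ * (A₂ - z • 1)⁻¹ * S⁻¹ * Pi1) :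
    wA * u = 1 ∧ u * wA = 1 ∧ wA⁻¹ = u := by
  set B₁ := A₁ - z • 1 with hB₁def
  set B₂ := A₂ - z • 1 with hB₂def
  have hB₁ : IsUnit B₁ := by
    rw [spectrum.notMem_iff] at hz₁
    have : B₁ = -(algebraMap ℂ (Matrix (Fin n) (Fin n) ℂ) z - A₁) := by
      rw [Algebra.algebraMap_eq_smul_one, neg_sub]
    rw [this]; exact hz₁.neg
  have hB₂ : IsUnit B₂ := by
    rw [spectrum.notMem_iff] at hz₂
    have : B₂ = -(algebraMap ℂ (Matrix (Fin n) (Fin n) ℂ) z - A₂) := by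
      rw [Algebra.algebraMap_eq_smul_one, neg_sub]
    rw [this]; exact hz₂.neg
  have hB₁l : B₁⁻¹ * B₁ = 1 := nonsing_inv_mul _ (isUnit_iff_isUnit_det _ |>.mp hB₁)
  have hB₁r : B₁ * B₁⁻¹ = 1 := mul_nonsing_inv _ (isUnit_iff_isUnit_det _ |>.mp hB₁)
  have hB₂l : B₂⁻¹ * B₂ = 1 := nonsing_inv_mul _ (isUnit_iff_isUnit_det _ |>.mp hB₂)
  have hB₂r : B₂ * B₂⁻¹ = 1 := mul_nonsing_inv _ (isUnit_iff_isUnit_det _ |>.mp hB₂)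
  have hSl : S⁻¹ * S = 1 := nonsing_inv_mul _ (isUnit_iff_isUnit_det _ |>.mp hS)
  have hSr : S * S⁻¹ = 1 := mul_nonsing_inv _ (isUnit_iff_isUnit_det _ |>.mp hS)
  have hnode' : B₁ * S - S * B₂ = Pi1 * Pi2ᴴ := by
    rw [hB₁def, hB₂def, sub_mul, mul_sub, smul_mul_assoc, mul_smul_comm, one_mul, mul_one,
      ← hnode]
    abel
  have key : S⁻¹ * (B₁⁻¹ * (Pi1 * (Pi2ᴴ * (B₂⁻¹ * (S⁻¹ * Pi1))))) =
      B₂⁻¹ * (S⁻¹ * Pi1) - S⁻¹ * (B₁⁻¹ * Pi1) := by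
    rw [← Matrix.mul_assoc Pi1 Pi2ᴴ, ← hnode']
    simp only [Matrix.sub_mul, Matrix.mul_sub, Matrix.mul_assoc, mcancel hB₁l, mcancel hB₂r, mcancel hSl,
      mcancel hSr]
  have key2 : B₂⁻¹ * (S⁻¹ * (Pi1 * (Pi2ᴴ * (S⁻¹ * (B₁⁻¹ * Pi1))))) =
      B₂⁻¹ * (S⁻¹ * Pi1) - S⁻¹ * (B₁⁻¹ * Pi1) := by
    rw [← Matrix.mul_assoc Pi1 Pi2ᴴ, ← hnode']
    simp only [Matrix.sub_mul, Matrix.mul_sub, Matrix.mul_assoc, mcancel hB₁r, mcancel hB₂l, mcancel hSl,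
      mcancel hSr]
  have h1 : wA * u = 1 := by
    rw [hwA, hu]
    simp only [Matrix.sub_mul, Matrix.add_mul, Matrix.mul_sub, Matrix.mul_add, Matrix.one_mul, Matrix.mul_one,
      Matrix.mul_assoc]
    rw [key, Matrix.mul_sub]
    abel
  have h2 : u * wA = 1 := by
    rw [hwA, hu]
    simp only [Matrix.sub_mul, Matrix.add_mul, Matrix.mul_sub, Matrix.mul_add, Matrix.one_mul, Matrix.mul_one,
      Matrix.mul_assoc]
    rw [key2, Matrix.mul_sub]
    abel
  exact ⟨h1, h2, inv_eq_right_inv h1⟩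
end
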